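/- Let A be a unital C*-algebra, and let γ, ε > 0. Then there exists δ > 0 such that for all positive contractions a, b ∈ A and every tracial state τ on A with ‖a − b‖_{2,τ} < δ, one has d_τ((a − ε)_+) < d_τ(b) + γ, where d_τ(x) = lim_{n→∞} τ(x^{1/n}). -/

import Mathlib

noncomputable section

variable {A : Type*} [CStarAlgebra A] [PartialOrder A] [StarOrderedRing A]

/-- A tracial state on a unital C*-algebra. -/
def IsTracialState (τ : A →ₗ[ℂ] ℂ) : Prop :=
  τ 1 = 1 ∧ (∀ a : A, 0 ≤ (τ (star a * a)).re ∧ (τ (star a * a)).im = 0) ∧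
    ∀ a b : A, τ (a * b) = τ (b * a)

/-- The 2-seminorm `‖a‖_{2,τ} = τ(a*a)^{1/2}`. -/
def trNorm (τ : A →ₗ[ℂ] ℂ) (a : A) : ℝ := Real.sqrt ((τ (star a * a)).re)

set_option linter.unusedSectionVars false
set_option maxHeartbeats 800000

namespace TraceAux

variable {τ : A →ₗ[ℂ] ℂ}

lemma tau_star (hτ : IsTracialState τ) (x : A) : τ (star x) = starRingEnd ℂ (τ x) := by
  have h1 := (hτ.2.1 (1 + x))
  have h2 := (hτ.2.1 (1 + Complex.I • x))
  have hx := (hτ.2.1 x)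
  have e1 : star (1 + x) * (1 + x) = 1 + (x + star x) + star x * x := by
    simp [add_mul, mul_add]; abel
  have e2 : star (1 + Complex.I • x) * (1 + Complex.I • x)
      = 1 + (Complex.I • x - Complex.I • star x) + star x * x := by
    simp [add_mul, mul_add, smul_smul, smul_mul_smul_comm, Complex.conj_I]
    abel
  rw [e1] at h1; rw [e2] at h2
  simp only [map_add, map_sub, map_smul, hτ.1, Complex.add_im, Complex.sub_im,
    Complex.one_im, smul_eq_mul, Complex.mul_im, Complex.I_re, Complex.I_im] at h1 h2
  rw [hx.2] at h1 h2
  apply Complex.ext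
  · rw [Complex.conj_re]; linarith [h2.2]
  · rw [Complex.conj_im]; linarith [h1.2]

lemma tau_nonneg (hτ : IsTracialState τ) {x : A} (hx : 0 ≤ x) :
    0 ≤ (τ x).re ∧ (τ x).im = 0 := by
  rw [StarOrderedRing.nonneg_iff] at hx
  induction hx using AddSubmonoid.closure_induction with
  | mem s hs => obtain ⟨c, rfl⟩ := hs; exact hτ.2.1 c
  | zero => simp
  | add s t _ _ hs ht =>
      rw [map_add]
      constructor
      · simpa using add_nonneg hs.1 ht.1
      · simp [hs.2, ht.2]

lemma tau_mono (hτ : IsTracialState τ) {x y : A} (h : x ≤ y) : (τ x).re ≤ (τ y).re := by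
  have := (tau_nonneg hτ (sub_nonneg.mpr h)).1
  rw [map_sub] at this
  simp only [Complex.sub_re] at this
  linarith

end TraceAux

namespace TraceAux2
open TraceAux
variable {τ : A →ₗ[ℂ] ℂ}

lemma normSq_tau_le (hτ : IsTracialState τ) (x : A) :
    Complex.normSq (τ x) ≤ (τ (star x * x)).re := by
  set l := τ x with hl
  have h := (hτ.2.1 (x - l • 1)).1
  have e : star (x - l • 1) * (x - l • 1)
      = star x * x - l • star x - (starRingEnd ℂ l) • x + (l * starRingEnd ℂ l) • 1 := by
    simp [sub_mul, mul_sub, smul_mul_assoc, mul_smul_comm, smul_smul, star_smul,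
      smul_add, smul_sub]
    abel
  rw [e] at h
  simp only [map_add, map_sub, map_smul, hτ.1, smul_eq_mul, mul_one] at h
  rw [tau_star hτ x, ← hl] at h
  have : (l * starRingEnd ℂ l).re = Complex.normSq l := by
    rw [Complex.mul_conj]; simp
  simp only [Complex.add_re, Complex.sub_re, Complex.mul_re] at h ⊢
  simp only [Complex.conj_re, Complex.conj_im] at h
  have hn : Complex.normSq l = l.re * l.re + l.im * l.im := Complex.normSq_apply l
  nlinarith [h]

lemma abs_tau_le_trNorm (hτ : IsTracialState τ) (x : A) : ‖τ x‖ ≤ trNorm τ x := by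
  rw [Complex.norm_def, trNorm]
  exact Real.sqrt_le_sqrt (normSq_tau_le hτ x)

lemma trNorm_nonneg (τ : A →ₗ[ℂ] ℂ) (x : A) : 0 ≤ trNorm τ x := Real.sqrt_nonneg _

lemma real_smul_eq (c : ℝ) (x : A) : c • x = (c : ℂ) • x := by
  rw [show ((c : ℂ)) = algebraMap ℝ ℂ c from rfl, algebraMap_smul]

lemma tau_real_smul (c : ℝ) (x : A) : τ (c • x) = (c : ℂ) * τ x := by
  rw [real_smul_eq, map_smul, smul_eq_mul]

lemma tau_algebraMap_re (hτ : IsTracialState τ) (r : ℝ) :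
    (τ (algebraMap ℝ A r)).re = r := by
  rw [Algebra.algebraMap_eq_smul_one, tau_real_smul, hτ.1, mul_one, Complex.ofReal_re]

lemma trNorm_le_norm (hτ : IsTracialState τ) (x : A) : trNorm τ x ≤ ‖x‖ := by
  have h1 : star x * x ≤ algebraMap ℝ A (‖x‖ ^ 2) := CStarAlgebra.star_mul_le_algebraMap_norm_sq
  have h2 := tau_mono hτ h1
  rw [tau_algebraMap_re hτ] at h2
  calc trNorm τ x ≤ Real.sqrt (‖x‖ ^ 2) := Real.sqrt_le_sqrt h2
    _ = ‖x‖ := by rw [Real.sqrt_sq (norm_nonneg x)]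

end TraceAux2

namespace TraceAux3
open TraceAux TraceAux2
variable {τ : A →ₗ[ℂ] ℂ}

lemma sqrt_helper {s t r : ℝ} (hr : 0 ≤ r) (h : s ≤ r ^ 2 * t) :
    Real.sqrt s ≤ r * Real.sqrt t := by
  calc Real.sqrt s ≤ Real.sqrt (r ^ 2 * t) := Real.sqrt_le_sqrt h
    _ = r * Real.sqrt t := by rw [Real.sqrt_mul (sq_nonneg r), Real.sqrt_sq hr]

lemma re_real_mul (r : ℝ) (z : ℂ) : ((r : ℂ) * z).re = r * z.re := by
  simp [Complex.mul_re]

lemma smul_sandwich (r : ℝ) (y : A) :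
    star y * algebraMap ℝ A r * y = r • (star y * y) := by
  rw [Algebra.algebraMap_eq_smul_one]
  simp [mul_smul_comm, smul_mul_assoc]

lemma trNorm_mul_le_left (hτ : IsTracialState τ) (x y : A) :
    trNorm τ (x * y) ≤ ‖x‖ * trNorm τ y := by
  apply sqrt_helper (norm_nonneg x)
  have h1 : star (x * y) * (x * y) = star y * (star x * x) * y := by
    rw [star_mul]; simp [mul_assoc]
  have h2 : star y * (star x * x) * y ≤ star y * algebraMap ℝ A (‖x‖ ^ 2) * y :=
    star_left_conjugate_le_conjugate CStarAlgebra.star_mul_le_algebraMap_norm_sq y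
  have h3 := tau_mono hτ h2
  rw [smul_sandwich, tau_real_smul, re_real_mul] at h3
  rw [h1]
  exact h3

lemma trNorm_mul_le_right (hτ : IsTracialState τ) (x y : A) :
    trNorm τ (y * x) ≤ ‖x‖ * trNorm τ y := by
  apply sqrt_helper (norm_nonneg x)
  set w := CFC.sqrt (star y * y) with hwdef
  have hw : 0 ≤ w := CFC.sqrt_nonneg _
  have hww : w * w = star y * y := CFC.sqrt_mul_sqrt_self _ (star_mul_self_nonneg y)
  have hws : IsSelfAdjoint w := IsSelfAdjoint.of_nonneg hw
  have key : τ (star (y * x) * (y * x)) = τ (w * (x * star x) * w) := by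
    rw [star_mul]
    calc τ (star x * star y * (y * x)) = τ (star x * ((star y * y) * x)) := by
          simp [mul_assoc]
      _ = τ ((star y * y) * x * star x) := by rw [hτ.2.2]
      _ = τ (w * (w * (x * star x))) := by rw [← hww]; simp [mul_assoc]
      _ = τ ((w * (x * star x)) * w) := by rw [hτ.2.2]
      _ = τ (w * (x * star x) * w) := rfl
  have h2 : w * (x * star x) * w ≤ w * algebraMap ℝ A (‖x‖ ^ 2) * w :=
    hws.conjugate_le_conjugate CStarAlgebra.mul_star_le_algebraMap_norm_sq
  have h3 := tau_mono hτ h2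
  have h4 : w * algebraMap ℝ A (‖x‖ ^ 2) * w = (‖x‖ ^ 2) • (star y * y) := by
    rw [← hww]
    nth_rewrite 1 [← hws.star_eq]
    rw [smul_sandwich, hws.star_eq]
  rw [h4, tau_real_smul, re_real_mul] at h3
  rw [key]
  exact h3

end TraceAux3

namespace TraceAux4
open TraceAux TraceAux2 TraceAux3 Polynomial
variable {τ : A →ₗ[ℂ] ℂ}

lemma tau_pow_diff [Nontrivial A] (hτ : IsTracialState τ) {a b : A} (ha : ‖a‖ ≤ 1) (hb : ‖b‖ ≤ 1) :
    ∀ k : ℕ, ∀ z : A, ‖τ (z * (a ^ k - b ^ k))‖ ≤ k * ‖z‖ * trNorm τ (a - b) := by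
  intro k
  induction k with
  | zero => intro z; simp
  | succ k IH =>
    intro z
    have key : z * (a ^ (k + 1) - b ^ (k + 1))
        = (z * a) * (a ^ k - b ^ k) + z * ((a - b) * b ^ k) := by
      rw [pow_succ' a, pow_succ' b]
      noncomm_ring
    have hT : 0 ≤ trNorm τ (a - b) := trNorm_nonneg τ _
    have h1 : ‖τ ((z * a) * (a ^ k - b ^ k))‖ ≤ k * ‖z‖ * trNorm τ (a - b) := by
      refine (IH (z * a)).trans ?_
      have : ‖z * a‖ ≤ ‖z‖ := (norm_mul_le z a).trans (by nlinarith [norm_nonneg z])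
      nlinarith [mul_nonneg (mul_nonneg (sub_nonneg.2 this) (Nat.cast_nonneg (α := ℝ) k)) hT]
    have h2 : ‖τ (z * ((a - b) * b ^ k))‖ ≤ ‖z‖ * trNorm τ (a - b) := by
      refine (abs_tau_le_trNorm hτ _).trans ?_
      refine (trNorm_mul_le_left hτ z _).trans ?_
      have h3 : trNorm τ ((a - b) * b ^ k) ≤ ‖b ^ k‖ * trNorm τ (a - b) :=
        trNorm_mul_le_right hτ (b ^ k) (a - b)
      have h4 : ‖b ^ k‖ ≤ 1 := by
        calc ‖b ^ k‖ ≤ ‖b‖ ^ k := norm_pow_le b k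
          _ ≤ 1 := pow_le_one₀ (norm_nonneg b) hb
      nlinarith [norm_nonneg z, trNorm_nonneg τ ((a - b) * b ^ k),
        mul_nonneg (mul_nonneg (sub_nonneg.2 h4) hT) (norm_nonneg z),
        mul_le_mul_of_nonneg_left h3 (norm_nonneg z)]
    calc ‖τ (z * (a ^ (k + 1) - b ^ (k + 1)))‖
        = ‖τ ((z * a) * (a ^ k - b ^ k)) + τ (z * ((a - b) * b ^ k))‖ := by
          rw [key, map_add]
      _ ≤ ‖τ ((z * a) * (a ^ k - b ^ k))‖ + ‖τ (z * ((a - b) * b ^ k))‖ := norm_add_le _ _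
      _ ≤ k * ‖z‖ * trNorm τ (a - b) + ‖z‖ * trNorm τ (a - b) := add_le_add h1 h2
      _ = (k + 1 : ℕ) * ‖z‖ * trNorm τ (a - b) := by push_cast; ring

lemma tau_aeval_diff [Nontrivial A] (hτ : IsTracialState τ) {a b : A}
    (ha : ‖a‖ ≤ 1) (hb : ‖b‖ ≤ 1) (p : ℝ[X]) :
    ‖τ (aeval a p - aeval b p)‖
      ≤ (∑ i ∈ Finset.range (p.natDegree + 1), |p.coeff i| * i) * trNorm τ (a - b) := by
  rw [aeval_eq_sum_range, aeval_eq_sum_range, ← Finset.sum_sub_distrib]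
  rw [map_sum]
  refine (norm_sum_le _ _).trans ?_
  rw [Finset.sum_mul]
  refine Finset.sum_le_sum fun i _ => ?_
  rw [← smul_sub, tau_real_smul]
  rw [norm_mul, Complex.norm_real, Real.norm_eq_abs]
  have := tau_pow_diff hτ ha hb i 1
  rw [norm_one, mul_one, one_mul] at this
  calc |p.coeff i| * ‖τ (a ^ i - b ^ i)‖
      ≤ |p.coeff i| * (i * trNorm τ (a - b)) := by
        exact mul_le_mul_of_nonneg_left this (abs_nonneg _)
    _ = |p.coeff i| * i * trNorm τ (a - b) := by ring

end TraceAux4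

section Scalar

lemma key_scalar (ε η : ℝ) (hε : 0 < ε) (hη : 0 < η) :
    ∃ N : ℕ, ∀ t ∈ Set.Icc (0:ℝ) 1, min (t/ε) 1 ≤ t ^ (1/((N:ℝ)+1)) + η := by
  set m := min ε 1 with hm
  have hm0 : 0 < m := lt_min hε one_pos
  have hm1 : m ≤ 1 := min_le_right _ _
  have hmε : m ≤ ε := min_le_left _ _
  set L := -Real.log (m ^ 2) with hLdef
  have hL : 0 ≤ L := by
    rw [hLdef, neg_nonneg]
    exact Real.log_nonpos (by positivity) (by nlinarith)
  refine ⟨max 1 ⌈L/η⌉₊, ?_⟩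
  set N := max 1 ⌈L/η⌉₊ with hN
  set r := 1/((N:ℝ)+1) with hr
  have hN1 : (1:ℝ) ≤ N := by exact_mod_cast le_max_left 1 ⌈L/η⌉₊
  have hr0 : 0 < r := by rw [hr]; positivity
  have hr2 : r ≤ 1/2 := by
    rw [hr]
    rw [div_le_div_iff₀ (by linarith) (by norm_num)]
    linarith
  have hrL : r * L ≤ η := by
    have h1 : L/η ≤ (N:ℝ) := by
      calc L/η ≤ (⌈L/η⌉₊ : ℝ) := Nat.le_ceil _
        _ ≤ (N:ℝ) := by exact_mod_cast le_max_right 1 ⌈L/η⌉₊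
    have h2 : L ≤ η * ((N:ℝ)+1) := by
      rw [div_le_iff₀ hη] at h1; nlinarith
    rw [hr, div_mul_eq_mul_div, one_mul, div_le_iff₀ (by linarith)]
    linarith
  have hbase : 1 - η ≤ (m^2) ^ r := by
    rw [Real.rpow_def_of_pos (by positivity)]
    have h1 : 1 + r * Real.log (m^2) ≤ Real.exp (r * Real.log (m^2)) :=
      (Real.add_one_le_exp _).trans_eq' (by ring)
    rw [show Real.log (m^2) * r = -(r*L) by rw [hLdef]; ring]
    have h2 : r * Real.log (m^2) = -(r*L) := by rw [hLdef]; ring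
    rw [h2] at h1
    linarith
  rintro t ⟨ht0, ht1⟩
  rcases le_or_gt t (m^2) with h | h
  · refine (min_le_left _ _).trans ?_
    rcases eq_or_lt_of_le ht0 with rfl | htpos
    · rw [zero_div, Real.zero_rpow hr0.ne']
      linarith
    · have h1r : t ^ (1-r) ≤ ε := by
        calc t ^ (1-r) ≤ (m^2) ^ (1-r) := Real.rpow_le_rpow ht0 h (by linarith)
          _ = m ^ ((2:ℝ)*(1-r)) := by
              rw [Real.rpow_mul hm0.le, Real.rpow_two]
          _ ≤ m ^ (1:ℝ) := Real.rpow_le_rpow_of_exponent_ge hm0 hm1 (by linarith)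
          _ = m := Real.rpow_one m
          _ ≤ ε := hmε
      have hts : t / ε ≤ t ^ r := by
        rw [div_le_iff₀ hε]
        calc t = t ^ r * t ^ (1-r) := by
              rw [← Real.rpow_add htpos]; norm_num
          _ ≤ t ^ r * ε := by
              exact mul_le_mul_of_nonneg_left h1r (Real.rpow_nonneg ht0 r)
      linarith
  · refine (min_le_right _ _).trans ?_
    have h2 : (m^2) ^ r ≤ t ^ r := Real.rpow_le_rpow (by positivity) h.le hr0.le
    linarith

end Scalar

/-- The dimension function `d_τ(x) = lim_{n→∞} τ(x^{1/n})`; since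
`n ↦ τ(x^{1/n})` is nondecreasing for a positive contraction `x`, the limit is the
supremum. -/
def dTau (τ : A →ₗ[ℂ] ℂ) (x : A) : ℝ :=
  ⨆ n : ℕ, (τ (cfc (fun t : ℝ => t ^ (1 / (n + 1 : ℝ))) x)).re

/-- The cut-down `(x − ε)₊ = f_ε(x)`, `f_ε(t) = max (t − ε) 0`. -/
def cutdown (ε : ℝ) (x : A) : A := cfc (fun t : ℝ => max (t - ε) 0) x

namespace CfcAux
open TraceAux TraceAux2 TraceAux3 TraceAux4

variable {τ : A →ₗ[ℂ] ℂ}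

lemma spec_subset [Nontrivial A] {a : A} (ha : 0 ≤ a) (h1 : ‖a‖ ≤ 1) :
    spectrum ℝ a ⊆ Set.Icc 0 1 := fun t ht =>
  ⟨spectrum_nonneg_of_nonneg ha ht,
    le_trans (le_trans (le_abs_self t) (spectrum.norm_le_norm_of_mem ht)) h1⟩

lemma rpow_continuous {r : ℝ} (hr : 0 ≤ r) : Continuous (fun t : ℝ => t ^ r) :=
  Real.continuous_rpow_const hr

lemma dTau_term_le_one [Nontrivial A] (hτ : IsTracialState τ) {x : A} (hx0 : 0 ≤ x)
    (hx1 : ‖x‖ ≤ 1) (n : ℕ) :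
    (τ (cfc (fun t : ℝ => t ^ (1 / (n + 1 : ℝ))) x)).re ≤ 1 := by
  have hnorm : ‖cfc (fun t : ℝ => t ^ (1 / (n + 1 : ℝ))) x‖ ≤ 1 := by
    apply norm_cfc_le zero_le_one
    intro t ht
    obtain ⟨ht0, ht1⟩ := spec_subset hx0 hx1 ht
    rw [Real.norm_eq_abs, abs_of_nonneg (Real.rpow_nonneg ht0 _)]
    exact Real.rpow_le_one ht0 ht1 (by positivity)
  calc (τ (cfc (fun t : ℝ => t ^ (1 / (n + 1 : ℝ))) x)).re
      ≤ ‖τ (cfc (fun t : ℝ => t ^ (1 / (n + 1 : ℝ))) x)‖ := Complex.re_le_norm _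
    _ ≤ trNorm τ _ := abs_tau_le_trNorm hτ _
    _ ≤ ‖cfc (fun t : ℝ => t ^ (1 / (n + 1 : ℝ))) x‖ := trNorm_le_norm hτ _
    _ ≤ 1 := hnorm

lemma lemA [Nontrivial A] (hτ : IsTracialState τ) {a : A} (ha0 : 0 ≤ a) (ha1 : ‖a‖ ≤ 1)
    {ε : ℝ} (hε : 0 < ε) :
    dTau τ (cutdown ε a) ≤ (τ (cfc (fun t : ℝ => min (t/ε) 1) a)).re := by
  apply ciSup_le
  intro n
  set r := 1 / ((n:ℝ) + 1) with hrdef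
  have hr0 : 0 < r := by positivity
  have hsa : IsSelfAdjoint a := IsSelfAdjoint.of_nonneg ha0
  have hcomp : cfc (fun t : ℝ => t ^ r) (cutdown ε a)
      = cfc ((fun t : ℝ => t ^ r) ∘ (fun t : ℝ => max (t - ε) 0)) a := by
    rw [cutdown]
    exact (cfc_comp (fun t : ℝ => t ^ r) (fun t : ℝ => max (t - ε) 0) a hsa
      ((rpow_continuous hr0.le).continuousOn)
      (Continuous.continuousOn (by fun_prop))).symm
  have hle : cfc ((fun t : ℝ => t ^ r) ∘ (fun t : ℝ => max (t - ε) 0)) a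
      ≤ cfc (fun t : ℝ => min (t/ε) 1) a := by
    apply cfc_mono
    · intro t ht
      obtain ⟨ht0, ht1⟩ := spec_subset ha0 ha1 ht
      rcases le_or_gt t ε with h | h
      · simp only [Function.comp]
        rw [max_eq_right (sub_nonpos.2 h), Real.zero_rpow hr0.ne']
        exact le_min (div_nonneg ht0 hε.le) zero_le_one
      · simp only [Function.comp]
        rw [max_eq_left (sub_nonneg.2 h.le)]
        have hle1 : (t - ε) ^ r ≤ 1 :=
          Real.rpow_le_one (by linarith) (by linarith) hr0.le
        exact le_min (hle1.trans (le_of_lt ((one_lt_div hε).2 h))) hle1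
    · exact Continuous.continuousOn
        ((rpow_continuous hr0.le).comp (by fun_prop))
    · exact Continuous.continuousOn (by fun_prop)
  calc (τ (cfc (fun t : ℝ => t ^ (1 / ((n:ℕ) + 1 : ℝ))) (cutdown ε a))).re
      = (τ (cfc ((fun t : ℝ => t ^ r) ∘ (fun t : ℝ => max (t - ε) 0)) a)).re := by
        rw [← hcomp]
    _ ≤ (τ (cfc (fun t : ℝ => min (t/ε) 1) a)).re := tau_mono hτ hle

lemma lemC [Nontrivial A] (hτ : IsTracialState τ) {b : A} (hb0 : 0 ≤ b) (hb1 : ‖b‖ ≤ 1)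
    {ε η : ℝ} (hε : 0 < ε) (hη : 0 < η) :
    (τ (cfc (fun t : ℝ => min (t/ε) 1) b)).re ≤ dTau τ b + η := by
  obtain ⟨N, hN⟩ := key_scalar ε η hε hη
  set r := 1 / ((N:ℝ) + 1) with hrdef
  have hr0 : 0 < r := by positivity
  have hsb : IsSelfAdjoint b := IsSelfAdjoint.of_nonneg hb0
  have h1 : cfc (fun t : ℝ => min (t/ε) 1) b ≤ cfc (fun t : ℝ => t ^ r + η) b := by
    apply cfc_mono
    · intro t ht
      exact hN t (spec_subset hb0 hb1 ht)
    · exact ((continuous_id.div_const ε).min continuous_const).continuousOn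
    · exact ((rpow_continuous hr0.le).add continuous_const).continuousOn
  have h2 : cfc (fun t : ℝ => t ^ r + η) b
      = cfc (fun t : ℝ => t ^ r) b + algebraMap ℝ A η :=
    cfc_add_const η _ b ((rpow_continuous hr0.le).continuousOn) hsb
  have h3 := tau_mono hτ h1
  rw [h2, map_add, Complex.add_re, tau_algebraMap_re hτ] at h3
  have h4 : (τ (cfc (fun t : ℝ => t ^ r) b)).re ≤ dTau τ b := by
    have hbdd : BddAbove (Set.range fun n : ℕ =>
        (τ (cfc (fun t : ℝ => t ^ (1 / (n + 1 : ℝ))) b)).re) := by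
      refine ⟨1, ?_⟩
      rintro x ⟨n, rfl⟩
      exact dTau_term_le_one hτ hb0 hb1 n
    exact le_ciSup hbdd N
  linarith

end CfcAux

open TraceAux TraceAux2 TraceAux3 TraceAux4 CfcAux Polynomial in
/-- Lemma 4.1(2): for `γ, ε > 0` there is `δ > 0` such that for all
positive contractions `a, b` and every tracial state `τ` with `‖a − b‖_{2,τ} < δ`,
one has `d_τ((a − ε)₊) < d_τ(b) + γ`. -/
theorem dTau_cutdown_lt (γ ε : ℝ) (hγ : 0 < γ) (hε : 0 < ε) :
    ∃ δ > (0 : ℝ), ∀ a b : A, 0 ≤ a → 0 ≤ b → ‖a‖ ≤ 1 → ‖b‖ ≤ 1 →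
      ∀ τ : A →ₗ[ℂ] ℂ, IsTracialState τ → trNorm τ (a - b) < δ →
        dTau τ (cutdown ε a) < dTau τ b + γ := by
  set g : ℝ → ℝ := fun t => min (t/ε) 1 with hg
  have hgc : Continuous g := by fun_prop
  set η := γ/8 with hη
  have hη0 : 0 < η := by positivity
  obtain ⟨p, hp⟩ := exists_polynomial_near_of_continuousOn 0 1 g hgc.continuousOn η hη0
  set C := ∑ i ∈ Finset.range (p.natDegree + 1), |p.coeff i| * i with hC
  have hC0 : 0 ≤ C := Finset.sum_nonneg fun i _ => by positivity
  refine ⟨η / (C + 1), by positivity, ?_⟩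
  intro a b ha0 hb0 ha1 hb1 τ hτ hab
  have hNT : Nontrivial A := by
    refine nontrivial_of_ne 1 0 fun h => ?_
    have h1 := hτ.1
    rw [h, map_zero] at h1
    exact one_ne_zero h1.symm
  -- Step A
  have hA : dTau τ (cutdown ε a) ≤ (τ (cfc g a)).re := lemA hτ ha0 ha1 hε
  -- Step C
  have hCstep : (τ (cfc g b)).re ≤ dTau τ b + η := lemC hτ hb0 hb1 hε hη0
  -- Step B
  have hdecomp : cfc g a - cfc g b
      = (cfc g a - aeval a p) + (aeval a p - aeval b p) + (aeval b p - cfc g b) := by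
    abel
  have hB1 : ‖τ (cfc g a - aeval a p)‖ ≤ η := by
    have he : cfc g a - aeval a p = cfc (fun t => g t - p.eval t) a := by
      rw [cfc_sub g (fun t => p.eval t) a hgc.continuousOn
        (Polynomial.continuous p).continuousOn, cfc_polynomial p a
        (IsSelfAdjoint.of_nonneg ha0)]
    rw [he]
    refine ((abs_tau_le_trNorm hτ _).trans (trNorm_le_norm hτ _)).trans ?_
    refine norm_cfc_le hη0.le fun t ht => ?_
    rw [Real.norm_eq_abs, abs_sub_comm]
    exact (hp t (spec_subset ha0 ha1 ht)).le
  have hB3 : ‖τ (aeval b p - cfc g b)‖ ≤ η := by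
    have he : aeval b p - cfc g b = cfc (fun t => p.eval t - g t) b := by
      rw [cfc_sub (fun t => p.eval t) g b (Polynomial.continuous p).continuousOn
        hgc.continuousOn, cfc_polynomial p b (IsSelfAdjoint.of_nonneg hb0)]
    rw [he]
    refine ((abs_tau_le_trNorm hτ _).trans (trNorm_le_norm hτ _)).trans ?_
    refine norm_cfc_le hη0.le fun t ht => ?_
    rw [Real.norm_eq_abs]
    exact (hp t (spec_subset hb0 hb1 ht)).le
  have hB2 : ‖τ (aeval a p - aeval b p)‖ ≤ C * trNorm τ (a - b) :=
    tau_aeval_diff hτ ha1 hb1 p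
  have hB : (τ (cfc g a)).re ≤ (τ (cfc g b)).re + (2*η + C * trNorm τ (a - b)) := by
    have h5 : (τ (cfc g a - cfc g b)).re ≤ 2*η + C * trNorm τ (a - b) := by
      calc (τ (cfc g a - cfc g b)).re ≤ ‖τ (cfc g a - cfc g b)‖ := Complex.re_le_norm _
        _ = ‖τ (cfc g a - aeval a p) + τ (aeval a p - aeval b p)
              + τ (aeval b p - cfc g b)‖ := by rw [hdecomp, map_add, map_add]
        _ ≤ ‖τ (cfc g a - aeval a p) + τ (aeval a p - aeval b p)‖
              + ‖τ (aeval b p - cfc g b)‖ := norm_add_le _ _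
        _ ≤ ‖τ (cfc g a - aeval a p)‖ + ‖τ (aeval a p - aeval b p)‖
              + ‖τ (aeval b p - cfc g b)‖ := by
                have := norm_add_le (τ (cfc g a - aeval a p)) (τ (aeval a p - aeval b p))
                linarith
        _ ≤ η + C * trNorm τ (a - b) + η := by
                exact add_le_add (add_le_add hB1 hB2) hB3
        _ = 2*η + C * trNorm τ (a - b) := by ring
    rw [map_sub, Complex.sub_re] at h5
    linarith
  -- combine
  have hT0 : 0 ≤ trNorm τ (a - b) := trNorm_nonneg τ _
  have hfinal : C * trNorm τ (a - b) ≤ η := by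
    have h6 : C * trNorm τ (a - b) ≤ C * (η / (C + 1)) :=
      mul_le_mul_of_nonneg_left hab.le hC0
    have h7 : C * (η / (C + 1)) ≤ η := by
      rw [mul_div_assoc']
      rw [div_le_iff₀ (by linarith)]
      nlinarith
    linarith
  have : dTau τ (cutdown ε a) ≤ dTau τ b + 4 * η := by linarith
  have h8 : 4 * η < γ := by rw [hη]; linarith
  linarith
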